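/- Fix k > 0, μ > 0 and R > 0, and let T = {ξ+iη : kξ < η < (1+μ)kξ} ∩ {|z| < R} be a truncated angular sector in ℂ⁺. Then there is a constant C = C(k,μ,R) such that for every ζ ∈ ℂ⁺, |ζ| · ∫_T dA(z)/(|z|·|ζ−z|·|ζ−z̄|) ≤ C. -/

import Mathlib

open MeasureTheory Metric Set
open scoped ENNReal NNReal

namespace Stmt6Aux

noncomputable section

lemma tsum_lt_top_of_geom (f : ℕ → ℝ≥0∞) (c : ℝ≥0∞) (hc : c ≠ ⊤)
    (h : ∀ n, f n ≤ c * 2⁻¹ ^ n) : ∑' n, f n < ⊤ := by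
  calc ∑' n, f n ≤ ∑' n : ℕ, c * 2⁻¹ ^ n := ENNReal.tsum_le_tsum h
    _ = c * ∑' n : ℕ, 2⁻¹ ^ n := ENNReal.tsum_mul_left
    _ < ⊤ := by
        rw [ENNReal.tsum_geometric, ENNReal.one_sub_inv_two]
        refine ENNReal.mul_lt_top hc.lt_top ?_
        simp

lemma lintegral_cover_le {s : Set ℂ} (hs : MeasurableSet s) (g : ℂ → ℝ≥0∞)
    (A : ℕ → Set ℂ) (hA : ∀ n, MeasurableSet (A n)) (hcov : s ⊆ ⋃ n, A n)
    (u : ℕ → ℝ≥0∞) (hb : ∀ n, ∀ w ∈ A n ∩ s, g w ≤ u n) :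
    ∫⁻ w in s, g w ≤ ∑' n, u n * volume (A n) := by
  have h1 : s ⊆ ⋃ n, (A n ∩ s) := by
    intro w hw
    obtain ⟨t, ⟨n, rfl⟩, hwt⟩ := hcov hw
    exact mem_iUnion.2 ⟨n, hwt, hw⟩
  calc ∫⁻ w in s, g w ≤ ∫⁻ w in ⋃ n, (A n ∩ s), g w := lintegral_mono_set h1
    _ ≤ ∑' n, ∫⁻ w in A n ∩ s, g w := lintegral_iUnion_le _ _
    _ ≤ ∑' n, u n * volume (A n) := by
        refine ENNReal.tsum_le_tsum fun n => ?_
        calc ∫⁻ w in A n ∩ s, g w ≤ ∫⁻ _ in A n ∩ s, u n :=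
              setLIntegral_mono' ((hA n).inter hs) (hb n)
          _ = u n * volume (A n ∩ s) := setLIntegral_const _ _
          _ ≤ u n * volume (A n) := mul_le_mul_right (measure_mono inter_subset_left) _

def g1 : ℂ → ℝ≥0∞ := fun w => ENNReal.ofReal (1 / (‖w‖ * Real.sqrt ‖w‖ * ‖1 - w‖))

lemma ofReal_pow_half (n : ℕ) : ENNReal.ofReal ((2:ℝ)⁻¹ ^ n) = (2⁻¹ : ℝ≥0∞) ^ n := by
  rw [ENNReal.ofReal_pow (by norm_num), ENNReal.ofReal_inv_of_pos (by norm_num),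
    ENNReal.ofReal_ofNat]

lemma piece1 : (∫⁻ w : ℂ in ball (0:ℂ) 2⁻¹ \ {0}, g1 w) < ⊤ := by
  classical
  set A : ℕ → Set ℂ := fun n => {w : ℂ | (4:ℝ)⁻¹ ^ (n+1) ≤ ‖w‖ ∧ ‖w‖ ≤ (4:ℝ)⁻¹ ^ n} with hA_def
  have hAm : ∀ n, MeasurableSet (A n) := fun n =>
    measurable_norm (measurableSet_Icc : MeasurableSet (Icc ((4:ℝ)⁻¹ ^ (n+1)) ((4:ℝ)⁻¹ ^ n)))
  have hsm : MeasurableSet (ball (0:ℂ) 2⁻¹ \ {0}) :=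
    measurableSet_ball.diff (measurableSet_singleton _)
  have hcov : ball (0:ℂ) 2⁻¹ \ {0} ⊆ ⋃ n, A n := by
    rintro w ⟨hwb, hw0⟩
    have hw0' : 0 < ‖w‖ := norm_pos_iff.2 (by simpa using hw0)
    have hwlt : ‖w‖ < 2⁻¹ := mem_ball_zero_iff.1 hwb
    have hex : ∃ n, (4:ℝ)⁻¹ ^ (n+1) ≤ ‖w‖ := by
      obtain ⟨n, hn⟩ := exists_pow_lt_of_lt_one hw0' (by norm_num : (4:ℝ)⁻¹ < 1)
      refine ⟨n, le_of_lt (lt_of_le_of_lt ?_ hn)⟩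
      exact pow_le_pow_of_le_one (by norm_num) (by norm_num) (by omega)
    refine mem_iUnion.2 ⟨Nat.find hex, Nat.find_spec hex, ?_⟩
    rcases Nat.eq_zero_or_pos (Nat.find hex) with h0 | hpos
    · rw [h0, pow_zero]; linarith
    · obtain ⟨m, hm⟩ := Nat.exists_eq_succ_of_ne_zero hpos.ne'
      have hmin := Nat.find_min hex (m := m) (by omega)
      rw [hm]
      push_neg at hmin
      exact hmin.le
  have hbound : ∀ n, ∀ w ∈ A n ∩ (ball (0:ℂ) 2⁻¹ \ {0}),
      g1 w ≤ ENNReal.ofReal (2 * 8 ^ (n+1)) := by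
    rintro n w ⟨⟨hlo, _⟩, hwb, _⟩
    have hwlt : ‖w‖ < 2⁻¹ := mem_ball_zero_iff.1 hwb
    have h1w : (2:ℝ)⁻¹ ≤ ‖1 - w‖ := by
      have := norm_sub_norm_le (1:ℂ) w
      rw [norm_one] at this; linarith
    have hsq : ((2:ℝ)⁻¹) ^ (n+1) ≤ Real.sqrt ‖w‖ := by
      rw [Real.le_sqrt (by positivity) (norm_nonneg _)]
      calc ((2:ℝ)⁻¹ ^ (n+1))^2 = (4:ℝ)⁻¹ ^ (n+1) := by
            rw [← pow_mul, mul_comm, pow_mul]; norm_num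
        _ ≤ ‖w‖ := hlo
    have hden : (4:ℝ)⁻¹ ^ (n+1) * (2:ℝ)⁻¹ ^ (n+1) * 2⁻¹ ≤ ‖w‖ * Real.sqrt ‖w‖ * ‖1 - w‖ := by
      gcongr
    have hd0 : (0:ℝ) < (4:ℝ)⁻¹ ^ (n+1) * (2:ℝ)⁻¹ ^ (n+1) * 2⁻¹ := by positivity
    refine ENNReal.ofReal_le_ofReal ?_
    rw [div_le_iff₀ (lt_of_lt_of_le hd0 hden)]
    have e3 : 2*(8:ℝ)^(n+1)*((4:ℝ)⁻¹^(n+1)*(2:ℝ)⁻¹^(n+1)*2⁻¹) = 1 := by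
      rw [show (2:ℝ)*(8:ℝ)^(n+1)*((4:ℝ)⁻¹^(n+1)*(2:ℝ)⁻¹^(n+1)*2⁻¹)
          = ((8:ℝ)*((4:ℝ)⁻¹*(2:ℝ)⁻¹))^(n+1) * (2*2⁻¹) from by
        rw [mul_pow, mul_pow]; ring]
      norm_num
    nlinarith [mul_le_mul_of_nonneg_left hden (show (0:ℝ) ≤ 2 * 8^(n+1) by positivity)]
  calc (∫⁻ w : ℂ in ball (0:ℂ) 2⁻¹ \ {0}, g1 w)
      ≤ ∑' n, ENNReal.ofReal (2 * 8 ^ (n+1)) * volume (A n) :=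
        lintegral_cover_le hsm g1 A hAm hcov _ hbound
    _ < ⊤ := by
        refine tsum_lt_top_of_geom _ (ENNReal.ofReal 16 * NNReal.pi)
          (ENNReal.mul_ne_top ENNReal.ofReal_ne_top ENNReal.coe_ne_top) fun n => ?_
        have hsub : A n ⊆ closedBall (0:ℂ) ((4:ℝ)⁻¹ ^ n) := fun w hw =>
          mem_closedBall_zero_iff.2 hw.2
        calc ENNReal.ofReal (2 * 8 ^ (n+1)) * volume (A n)
            ≤ ENNReal.ofReal (2 * 8 ^ (n+1)) * volume (closedBall (0:ℂ) ((4:ℝ)⁻¹ ^ n)) :=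
              mul_le_mul_right (measure_mono hsub) _
          _ = ENNReal.ofReal (2 * 8 ^ (n+1)) * (ENNReal.ofReal ((4:ℝ)⁻¹ ^ n) ^ 2 * NNReal.pi) := by
              rw [Complex.volume_closedBall]
          _ = ENNReal.ofReal (2 * 8 ^ (n+1) * ((4:ℝ)⁻¹ ^ n) ^ 2) * NNReal.pi := by
              rw [← ENNReal.ofReal_pow (by positivity), ← mul_assoc,
                ← ENNReal.ofReal_mul (by positivity), mul_assoc]
          _ = ENNReal.ofReal (16 * (2:ℝ)⁻¹ ^ n) * NNReal.pi := by
              congr 1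
              rw [show (2:ℝ) * 8^(n+1) * ((4:ℝ)⁻¹^n)^2 = 16 * ((8:ℝ)*((4:ℝ)⁻¹*(4:ℝ)⁻¹))^n from by
                rw [mul_pow, mul_pow, pow_succ]; ring]
              norm_num
          _ = ENNReal.ofReal 16 * NNReal.pi * 2⁻¹ ^ n := by
              rw [ENNReal.ofReal_mul (by norm_num), ofReal_pow_half]
              ring

lemma piece2 : (∫⁻ w : ℂ in ball (1:ℂ) 2⁻¹ \ {1}, g1 w) < ⊤ := by
  classical
  set A : ℕ → Set ℂ := fun n => {w : ℂ | (2:ℝ)⁻¹ ^ (n+1) ≤ ‖1 - w‖ ∧ ‖1 - w‖ ≤ (2:ℝ)⁻¹ ^ n}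
    with hA_def
  have hAm : ∀ n, MeasurableSet (A n) := fun n =>
    ((measurable_const.sub measurable_id).norm)
      (measurableSet_Icc : MeasurableSet (Icc ((2:ℝ)⁻¹ ^ (n+1)) ((2:ℝ)⁻¹ ^ n)))
  have hsm : MeasurableSet (ball (1:ℂ) 2⁻¹ \ {1}) :=
    measurableSet_ball.diff (measurableSet_singleton _)
  have hdist : ∀ w : ℂ, dist w 1 = ‖1 - w‖ := fun w => by
    rw [dist_eq_norm, norm_sub_rev]
  have hcov : ball (1:ℂ) 2⁻¹ \ {1} ⊆ ⋃ n, A n := by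
    rintro w ⟨hwb, hw1⟩
    have hw1' : 0 < ‖1 - w‖ := by
      rw [norm_pos_iff, sub_ne_zero]
      exact fun h => hw1 (by simp [h.symm])
    have hwlt : ‖1 - w‖ < 2⁻¹ := by
      rw [← hdist w]; exact mem_ball.1 hwb
    have hex : ∃ n, (2:ℝ)⁻¹ ^ (n+1) ≤ ‖1 - w‖ := by
      obtain ⟨n, hn⟩ := exists_pow_lt_of_lt_one hw1' (by norm_num : (2:ℝ)⁻¹ < 1)
      refine ⟨n, le_of_lt (lt_of_le_of_lt ?_ hn)⟩
      exact pow_le_pow_of_le_one (by norm_num) (by norm_num) (by omega)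
    refine mem_iUnion.2 ⟨Nat.find hex, Nat.find_spec hex, ?_⟩
    rcases Nat.eq_zero_or_pos (Nat.find hex) with h0 | hpos
    · rw [h0, pow_zero]; linarith
    · obtain ⟨m, hm⟩ := Nat.exists_eq_succ_of_ne_zero hpos.ne'
      have hmin := Nat.find_min hex (m := m) (by omega)
      rw [hm]
      push_neg at hmin
      exact hmin.le
  have hbound : ∀ n, ∀ w ∈ A n ∩ (ball (1:ℂ) 2⁻¹ \ {1}),
      g1 w ≤ ENNReal.ofReal (4 * 2 ^ (n+1)) := by
    rintro n w ⟨⟨hlo, _⟩, hwb, _⟩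
    have hwlt : ‖1 - w‖ < 2⁻¹ := by
      rw [← hdist w]; exact mem_ball.1 hwb
    have hwn : (2:ℝ)⁻¹ ≤ ‖w‖ := by
      have h1 : ‖(1:ℂ)‖ ≤ ‖w‖ + ‖1 - w‖ := by
        calc ‖(1:ℂ)‖ = ‖w + (1 - w)‖ := by ring_nf
          _ ≤ ‖w‖ + ‖1 - w‖ := norm_add_le _ _
      rw [norm_one] at h1; linarith
    have hsq : (2:ℝ)⁻¹ ≤ Real.sqrt ‖w‖ := by
      rw [Real.le_sqrt (by norm_num) (norm_nonneg _)]
      nlinarith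
    have hden : (2:ℝ)⁻¹ * (2:ℝ)⁻¹ * (2:ℝ)⁻¹ ^ (n+1) ≤ ‖w‖ * Real.sqrt ‖w‖ * ‖1 - w‖ := by
      gcongr
    have hd0 : (0:ℝ) < (2:ℝ)⁻¹ * (2:ℝ)⁻¹ * (2:ℝ)⁻¹ ^ (n+1) := by positivity
    refine ENNReal.ofReal_le_ofReal ?_
    rw [div_le_iff₀ (lt_of_lt_of_le hd0 hden)]
    have e3 : 4*(2:ℝ)^(n+1)*((2:ℝ)⁻¹*(2:ℝ)⁻¹*(2:ℝ)⁻¹^(n+1)) = 1 := by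
      rw [show (4:ℝ)*(2:ℝ)^(n+1)*((2:ℝ)⁻¹*(2:ℝ)⁻¹*(2:ℝ)⁻¹^(n+1))
          = ((2:ℝ)*(2:ℝ)⁻¹)^(n+1) * (4*(2⁻¹*2⁻¹)) from by rw [mul_pow]; ring]
      norm_num
    nlinarith [mul_le_mul_of_nonneg_left hden (show (0:ℝ) ≤ 4 * 2^(n+1) by positivity)]
  calc (∫⁻ w : ℂ in ball (1:ℂ) 2⁻¹ \ {1}, g1 w)
      ≤ ∑' n, ENNReal.ofReal (4 * 2 ^ (n+1)) * volume (A n) :=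
        lintegral_cover_le hsm g1 A hAm hcov _ hbound
    _ < ⊤ := by
        refine tsum_lt_top_of_geom _ (ENNReal.ofReal 8 * NNReal.pi)
          (ENNReal.mul_ne_top ENNReal.ofReal_ne_top ENNReal.coe_ne_top) fun n => ?_
        have hsub : A n ⊆ closedBall (1:ℂ) ((2:ℝ)⁻¹ ^ n) := fun w hw => by
          rw [mem_closedBall, hdist w]; exact hw.2
        calc ENNReal.ofReal (4 * 2 ^ (n+1)) * volume (A n)
            ≤ ENNReal.ofReal (4 * 2 ^ (n+1)) * volume (closedBall (1:ℂ) ((2:ℝ)⁻¹ ^ n)) :=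
              mul_le_mul_right (measure_mono hsub) _
          _ = ENNReal.ofReal (4 * 2 ^ (n+1)) * (ENNReal.ofReal ((2:ℝ)⁻¹ ^ n) ^ 2 * NNReal.pi) := by
              rw [Complex.volume_closedBall]
          _ = ENNReal.ofReal (4 * 2 ^ (n+1) * ((2:ℝ)⁻¹ ^ n) ^ 2) * NNReal.pi := by
              rw [← ENNReal.ofReal_pow (by positivity), ← mul_assoc,
                ← ENNReal.ofReal_mul (by positivity), mul_assoc]
          _ = ENNReal.ofReal (8 * (2:ℝ)⁻¹ ^ n) * NNReal.pi := by
              congr 1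
              rw [show (4:ℝ) * 2^(n+1) * ((2:ℝ)⁻¹^n)^2 = 8 * ((2:ℝ)*((2:ℝ)⁻¹*(2:ℝ)⁻¹))^n from by
                rw [mul_pow, mul_pow, pow_succ]; ring]
              norm_num
          _ = ENNReal.ofReal 8 * NNReal.pi * 2⁻¹ ^ n := by
              rw [ENNReal.ofReal_mul (by norm_num), ofReal_pow_half]
              ring

lemma piece3 : (∫⁻ w : ℂ in (ball (0:ℂ) 2⁻¹ ∪ ball (1:ℂ) 2⁻¹)ᶜ, g1 w) < ⊤ := by
  classical
  set s : Set ℂ := (ball (0:ℂ) 2⁻¹ ∪ ball (1:ℂ) 2⁻¹)ᶜ with hs_def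
  have hsm : MeasurableSet s := (measurableSet_ball.union measurableSet_ball).compl
  have hmem : ∀ w ∈ s, (2:ℝ)⁻¹ ≤ ‖w‖ ∧ (2:ℝ)⁻¹ ≤ ‖1 - w‖ := by
    intro w hw
    rw [hs_def, compl_union, mem_inter_iff] at hw
    constructor
    · have := hw.1
      rw [mem_compl_iff, mem_ball_zero_iff] at this
      push_neg at this
      exact this
    · have := hw.2
      rw [mem_compl_iff, mem_ball, dist_eq_norm] at this
      push_neg at this
      rwa [norm_sub_rev] at this
  set A : ℕ → Set ℂ := fun n => {w : ℂ | 2⁻¹ * (4:ℝ) ^ n ≤ ‖w‖ ∧ ‖w‖ ≤ 2 * (4:ℝ) ^ n}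
    with hA_def
  have hAm : ∀ n, MeasurableSet (A n) := fun n =>
    measurable_norm (measurableSet_Icc : MeasurableSet (Icc (2⁻¹ * (4:ℝ) ^ n) (2 * (4:ℝ) ^ n)))
  have hcov : s ⊆ ⋃ n, A n := by
    intro w hw
    have hwn : (2:ℝ)⁻¹ ≤ ‖w‖ := (hmem w hw).1
    have hex : ∃ n, ‖w‖ ≤ 2 * (4:ℝ) ^ n := by
      obtain ⟨n, hn⟩ := pow_unbounded_of_one_lt ‖w‖ (by norm_num : (1:ℝ) < 4)
      exact ⟨n, by nlinarith [pow_pos (show (0:ℝ) < 4 by norm_num) n]⟩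
    refine mem_iUnion.2 ⟨Nat.find hex, ?_, Nat.find_spec hex⟩
    rcases Nat.eq_zero_or_pos (Nat.find hex) with h0 | hpos
    · rw [h0, pow_zero]; linarith
    · obtain ⟨m, hm⟩ := Nat.exists_eq_succ_of_ne_zero hpos.ne'
      have hmin := Nat.find_min hex (m := m) (by omega)
      push_neg at hmin
      rw [hm, pow_succ]
      linarith
  have hbound : ∀ n, ∀ w ∈ A n ∩ s,
      g1 w ≤ ENNReal.ofReal (24 * (32:ℝ)⁻¹ ^ n) := by
    rintro n w ⟨⟨hlo, _⟩, hws⟩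
    obtain ⟨hwn, hw1⟩ := hmem w hws
    have h4 : (0:ℝ) < (4:ℝ) ^ n := pow_pos (by norm_num) n
    have h2 : (0:ℝ) < (2:ℝ) ^ n := pow_pos (by norm_num) n
    have h3 : ‖w‖ / 3 ≤ ‖1 - w‖ := by
      rcases le_or_gt ‖w‖ (3/2) with h | h
      · linarith
      · have := norm_sub_norm_le w (1:ℂ)
        rw [norm_one, norm_sub_rev] at this
        linarith
    have hsq : 2⁻¹ * (2:ℝ) ^ n ≤ Real.sqrt ‖w‖ := by
      rw [Real.le_sqrt (by positivity) (norm_nonneg _)]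
      have e : ((2:ℝ)⁻¹ * 2 ^ n)^2 = 4⁻¹ * (4:ℝ)^n := by
        rw [mul_pow, ← pow_mul, mul_comm n 2, pow_mul]; norm_num
      rw [e]
      nlinarith
    have h1w : 6⁻¹ * (4:ℝ) ^ n ≤ ‖1 - w‖ := by
      calc 6⁻¹ * (4:ℝ) ^ n = (2⁻¹ * 4 ^ n) / 3 := by ring
        _ ≤ ‖w‖ / 3 := by linarith
        _ ≤ ‖1 - w‖ := h3
    have hden : (2⁻¹ * (4:ℝ)^n) * (2⁻¹ * (2:ℝ)^n) * (6⁻¹ * (4:ℝ)^n)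
        ≤ ‖w‖ * Real.sqrt ‖w‖ * ‖1 - w‖ := by
      gcongr
    have hd0 : (0:ℝ) < (2⁻¹ * (4:ℝ)^n) * (2⁻¹ * (2:ℝ)^n) * (6⁻¹ * (4:ℝ)^n) := by positivity
    refine ENNReal.ofReal_le_ofReal ?_
    rw [div_le_iff₀ (lt_of_lt_of_le hd0 hden)]
    have e3 : 24 * (32:ℝ)⁻¹^n * ((2⁻¹ * (4:ℝ)^n) * (2⁻¹ * (2:ℝ)^n) * (6⁻¹ * (4:ℝ)^n)) = 1 := by
      rw [show 24 * (32:ℝ)⁻¹^n * ((2⁻¹ * (4:ℝ)^n) * (2⁻¹ * (2:ℝ)^n) * (6⁻¹ * (4:ℝ)^n))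
          = ((32:ℝ)⁻¹*((4:ℝ)*(2:ℝ)*(4:ℝ)))^n * (24*(2⁻¹*2⁻¹*6⁻¹)) from by
        rw [mul_pow, mul_pow, mul_pow]; ring]
      norm_num
    nlinarith [mul_le_mul_of_nonneg_left hden
      (show (0:ℝ) ≤ 24 * (32:ℝ)⁻¹^n by positivity)]
  calc (∫⁻ w : ℂ in s, g1 w)
      ≤ ∑' n, ENNReal.ofReal (24 * (32:ℝ)⁻¹ ^ n) * volume (A n) :=
        lintegral_cover_le hsm g1 A hAm hcov _ hbound
    _ < ⊤ := by
        refine tsum_lt_top_of_geom _ (ENNReal.ofReal 96 * NNReal.pi)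
          (ENNReal.mul_ne_top ENNReal.ofReal_ne_top ENNReal.coe_ne_top) fun n => ?_
        have hsub : A n ⊆ closedBall (0:ℂ) (2 * (4:ℝ) ^ n) := fun w hw =>
          mem_closedBall_zero_iff.2 hw.2
        calc ENNReal.ofReal (24 * (32:ℝ)⁻¹ ^ n) * volume (A n)
            ≤ ENNReal.ofReal (24 * (32:ℝ)⁻¹ ^ n) * volume (closedBall (0:ℂ) (2 * (4:ℝ) ^ n)) :=
              mul_le_mul_right (measure_mono hsub) _
          _ = ENNReal.ofReal (24 * (32:ℝ)⁻¹ ^ n) *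
              (ENNReal.ofReal (2 * (4:ℝ) ^ n) ^ 2 * NNReal.pi) := by
              rw [Complex.volume_closedBall]
          _ = ENNReal.ofReal (24 * (32:ℝ)⁻¹ ^ n * (2 * (4:ℝ) ^ n) ^ 2) * NNReal.pi := by
              rw [← ENNReal.ofReal_pow (by positivity), ← mul_assoc,
                ← ENNReal.ofReal_mul (by positivity), mul_assoc]
          _ = ENNReal.ofReal (96 * (2:ℝ)⁻¹ ^ n) * NNReal.pi := by
              congr 1
              rw [show 24 * (32:ℝ)⁻¹^n * (2 * (4:ℝ)^n)^2
                  = 96 * ((32:ℝ)⁻¹*((4:ℝ)*(4:ℝ)))^n from by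
                rw [mul_pow, mul_pow, mul_pow]; ring]
              norm_num
          _ = ENNReal.ofReal 96 * NNReal.pi * 2⁻¹ ^ n := by
              rw [ENNReal.ofReal_mul (by norm_num), ofReal_pow_half]
              ring

lemma J1_lt_top : (∫⁻ w : ℂ, g1 w) < ⊤ := by
  have hcover : (univ : Set ℂ) ⊆
      ((ball (0:ℂ) 2⁻¹ \ {0}) ∪ ({0} : Set ℂ)) ∪
      (((ball (1:ℂ) 2⁻¹ \ {1}) ∪ ({1} : Set ℂ)) ∪ (ball (0:ℂ) 2⁻¹ ∪ ball (1:ℂ) 2⁻¹)ᶜ) := by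
    intro w _
    by_cases h0 : w ∈ ball (0:ℂ) 2⁻¹
    · by_cases hz : w = 0
      · exact Or.inl (Or.inr (by simp [hz]))
      · exact Or.inl (Or.inl ⟨h0, hz⟩)
    · by_cases h1 : w ∈ ball (1:ℂ) 2⁻¹
      · by_cases hz : w = 1
        · exact Or.inr (Or.inl (Or.inr (by simp [hz])))
        · exact Or.inr (Or.inl (Or.inl ⟨h1, hz⟩))
      · exact Or.inr (Or.inr (by simp [h0, h1]))
  have hz0 : (∫⁻ w : ℂ in ({0} : Set ℂ), g1 w) = 0 :=
    setLIntegral_measure_zero _ _ (measure_singleton _)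
  have hz1 : (∫⁻ w : ℂ in ({1} : Set ℂ), g1 w) = 0 :=
    setLIntegral_measure_zero _ _ (measure_singleton _)
  calc (∫⁻ w : ℂ, g1 w) = ∫⁻ w : ℂ in univ, g1 w := (setLIntegral_univ _).symm
    _ ≤ ∫⁻ w : ℂ in ((ball (0:ℂ) 2⁻¹ \ {0}) ∪ ({0} : Set ℂ)) ∪
        (((ball (1:ℂ) 2⁻¹ \ {1}) ∪ ({1} : Set ℂ)) ∪ (ball (0:ℂ) 2⁻¹ ∪ ball (1:ℂ) 2⁻¹)ᶜ), g1 w :=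
        lintegral_mono_set hcover
    _ ≤ (∫⁻ w : ℂ in (ball (0:ℂ) 2⁻¹ \ {0}) ∪ ({0} : Set ℂ), g1 w) +
        (∫⁻ w : ℂ in ((ball (1:ℂ) 2⁻¹ \ {1}) ∪ ({1} : Set ℂ)) ∪
          (ball (0:ℂ) 2⁻¹ ∪ ball (1:ℂ) 2⁻¹)ᶜ, g1 w) := lintegral_union_le _ _ _
    _ ≤ ((∫⁻ w : ℂ in ball (0:ℂ) 2⁻¹ \ {0}, g1 w) + (∫⁻ w : ℂ in ({0} : Set ℂ), g1 w)) +
        (((∫⁻ w : ℂ in ball (1:ℂ) 2⁻¹ \ {1}, g1 w) + (∫⁻ w : ℂ in ({1} : Set ℂ), g1 w)) +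
          (∫⁻ w : ℂ in (ball (0:ℂ) 2⁻¹ ∪ ball (1:ℂ) 2⁻¹)ᶜ, g1 w)) := by
        gcongr
        · exact lintegral_union_le _ _ _
        · exact le_trans (lintegral_union_le _ _ _)
            (add_le_add (lintegral_union_le _ _ _) le_rfl)
    _ < ⊤ := by
        rw [hz0, hz1, add_zero, add_zero]
        exact ENNReal.add_lt_top.2 ⟨piece1, ENNReal.add_lt_top.2 ⟨piece2, piece3⟩⟩

lemma measurable_G (ζ : ℂ) :
    Measurable fun w : ℂ => ENNReal.ofReal (1 / (‖w‖ * Real.sqrt ‖w‖ * ‖ζ - w‖)) := by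
  have m1 : Measurable fun w : ℂ => ‖w‖ := measurable_norm
  have m2 : Measurable fun w : ℂ => Real.sqrt ‖w‖ :=
    Real.continuous_sqrt.measurable.comp m1
  have m3 : Measurable fun w : ℂ => ‖ζ - w‖ := (measurable_const.sub measurable_id).norm
  exact (measurable_const.div ((m1.mul m2).mul m3)).ennreal_ofReal

lemma scaling (ζ : ℂ) (hζ : ζ ≠ 0) :
    (∫⁻ w : ℂ, ENNReal.ofReal (1 / (‖w‖ * Real.sqrt ‖w‖ * ‖ζ - w‖))) =
      ENNReal.ofReal (1 / Real.sqrt ‖ζ‖) * ∫⁻ w : ℂ, g1 w := by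
  have hnormSq : 0 < Complex.normSq ζ := Complex.normSq_pos.2 hζ
  have hdet : LinearMap.det ((Algebra.lmul ℝ ℂ) ζ) = Complex.normSq ζ := by
    rw [← Algebra.norm_apply, Algebra.norm_complex_apply]
  have hdet0 : LinearMap.det ((Algebra.lmul ℝ ℂ) ζ) ≠ 0 := by
    rw [hdet]; exact hnormSq.ne'
  have hmap := Measure.map_linearMap_addHaar_eq_smul_addHaar (volume : Measure ℂ) hdet0
  rw [hdet] at hmap
  have hcoe : ⇑((Algebra.lmul ℝ ℂ) ζ) = fun w : ℂ => ζ * w := rfl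
  rw [hcoe] at hmap
  have hG := measurable_G ζ
  have h1 : (∫⁻ w : ℂ, ENNReal.ofReal (1 / (‖ζ * w‖ * Real.sqrt ‖ζ * w‖ * ‖ζ - ζ * w‖)))
      = ENNReal.ofReal |(Complex.normSq ζ)⁻¹| *
        ∫⁻ w : ℂ, ENNReal.ofReal (1 / (‖w‖ * Real.sqrt ‖w‖ * ‖ζ - w‖)) := by
    have hmul : Measurable fun w : ℂ => ζ * w := measurable_const_mul ζ
    rw [← lintegral_map hG hmul, hmap, lintegral_smul_measure, smul_eq_mul]
  have h2 : ∀ w : ℂ, ENNReal.ofReal (1 / (‖ζ * w‖ * Real.sqrt ‖ζ * w‖ * ‖ζ - ζ * w‖))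
      = ENNReal.ofReal (1 / (‖ζ‖ ^ 2 * Real.sqrt ‖ζ‖)) * g1 w := by
    intro w
    have e : 1 / (‖ζ * w‖ * Real.sqrt ‖ζ * w‖ * ‖ζ - ζ * w‖)
        = (1 / (‖ζ‖ ^ 2 * Real.sqrt ‖ζ‖)) * (1 / (‖w‖ * Real.sqrt ‖w‖ * ‖1 - w‖)) := by
      rw [show ζ - ζ * w = ζ * (1 - w) from by ring, norm_mul, norm_mul,
        Real.sqrt_mul (norm_nonneg ζ)]
      ring
    rw [g1, e, ENNReal.ofReal_mul (by positivity)]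
  have h3 : (∫⁻ w : ℂ, ENNReal.ofReal (1 / (‖ζ * w‖ * Real.sqrt ‖ζ * w‖ * ‖ζ - ζ * w‖)))
      = ENNReal.ofReal (1 / (‖ζ‖ ^ 2 * Real.sqrt ‖ζ‖)) * ∫⁻ w : ℂ, g1 w := by
    simp_rw [h2]
    exact lintegral_const_mul' _ _ ENNReal.ofReal_ne_top
  have hone : ENNReal.ofReal (Complex.normSq ζ) * ENNReal.ofReal |(Complex.normSq ζ)⁻¹| = 1 := by
    rw [abs_of_pos (inv_pos.2 hnormSq), ← ENNReal.ofReal_mul hnormSq.le,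
      mul_inv_cancel₀ hnormSq.ne', ENNReal.ofReal_one]
  have hnorm0 : (0:ℝ) < ‖ζ‖ := norm_pos_iff.2 hζ
  calc (∫⁻ w : ℂ, ENNReal.ofReal (1 / (‖w‖ * Real.sqrt ‖w‖ * ‖ζ - w‖)))
      = 1 * ∫⁻ w : ℂ, ENNReal.ofReal (1 / (‖w‖ * Real.sqrt ‖w‖ * ‖ζ - w‖)) := (one_mul _).symm
    _ = ENNReal.ofReal (Complex.normSq ζ) * (ENNReal.ofReal |(Complex.normSq ζ)⁻¹| *
        ∫⁻ w : ℂ, ENNReal.ofReal (1 / (‖w‖ * Real.sqrt ‖w‖ * ‖ζ - w‖))) := by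
        rw [← mul_assoc, hone]
    _ = ENNReal.ofReal (Complex.normSq ζ) *
        (ENNReal.ofReal (1 / (‖ζ‖ ^ 2 * Real.sqrt ‖ζ‖)) * ∫⁻ w : ℂ, g1 w) := by
        rw [← h1, h3]
    _ = ENNReal.ofReal (Complex.normSq ζ * (1 / (‖ζ‖ ^ 2 * Real.sqrt ‖ζ‖))) *
        ∫⁻ w : ℂ, g1 w := by
        rw [ENNReal.ofReal_mul hnormSq.le, mul_assoc]
    _ = ENNReal.ofReal (1 / Real.sqrt ‖ζ‖) * ∫⁻ w : ℂ, g1 w := by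
        congr 2
        rw [← Complex.sq_norm, mul_one_div, div_mul_eq_div_div,
          div_self (pow_ne_zero 2 hnorm0.ne')]

lemma key_geom (k : ℝ) (hk : 0 < k) (ζ z : ℂ) (hζ : 0 < ζ.im)
    (hz1 : k * z.re < z.im) (hzre : 0 < z.re) :
    2 * (1 - (Real.sqrt (1 + k ^ 2))⁻¹) * ‖ζ‖ * ‖z‖ ≤ ‖ζ - (starRingEnd ℂ) z‖ ^ 2 := by
  set s : ℝ := Real.sqrt (1 + k ^ 2) with hs_def
  have hs1 : 1 < s := by
    rw [hs_def]
    exact (Real.lt_sqrt (by norm_num)).mpr (by nlinarith)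
  have hspos : 0 < s := by linarith
  have him : 0 < z.im := lt_trans (by positivity) hz1
  have hzn : 0 < ‖z‖ := by
    rw [norm_pos_iff]
    exact fun h => by simp [h] at him
  have hζn : 0 < ‖ζ‖ := by
    rw [norm_pos_iff]
    exact fun h => by simp [h] at hζ
  have hznsq : ‖z‖ ^ 2 = z.re * z.re + z.im * z.im := by
    rw [Complex.sq_norm, Complex.normSq_apply]
  have hζnsq : ‖ζ‖ ^ 2 = ζ.re * ζ.re + ζ.im * ζ.im := by
    rw [Complex.sq_norm, Complex.normSq_apply]
  have hre_z : z.re * s ≤ ‖z‖ := by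
    have h1 : z.re * s = Real.sqrt (z.re ^ 2 * (1 + k ^ 2)) := by
      rw [Real.sqrt_mul (sq_nonneg _), Real.sqrt_sq hzre.le]
    have h2 : ‖z‖ = Real.sqrt (z.re * z.re + z.im * z.im) := by
      rw [Complex.norm_def, Complex.normSq_apply]
    rw [h1, h2]
    apply Real.sqrt_le_sqrt
    nlinarith [mul_pos (sub_pos.mpr hz1) (show (0:ℝ) < k * z.re + z.im by positivity)]
  have hre_z' : z.re ≤ ‖z‖ * s⁻¹ := by
    have h := (le_div_iff₀ hspos).mpr hre_z
    rwa [div_eq_mul_inv] at h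
  have hreζ : ζ.re ≤ ‖ζ‖ := by
    calc ζ.re ≤ |ζ.re| := le_abs_self _
      _ ≤ ‖ζ‖ := by exact Complex.abs_re_le_norm ζ
  have hN2 : ‖ζ - (starRingEnd ℂ) z‖ ^ 2
      = (ζ.re - z.re) ^ 2 + (ζ.im + z.im) ^ 2 := by
    rw [Complex.sq_norm, Complex.normSq_apply]
    simp [Complex.sub_re, Complex.sub_im, Complex.conj_re, Complex.conj_im]
    ring
  have hprod : ζ.re * z.re ≤ ‖ζ‖ * (‖z‖ * s⁻¹) := by
    calc ζ.re * z.re ≤ ‖ζ‖ * z.re := by nlinarith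
      _ ≤ ‖ζ‖ * (‖z‖ * s⁻¹) := by nlinarith
  have hinv1 : s⁻¹ < 1 := by
    rw [inv_lt_one_iff₀]; right; exact hs1
  have hinvpos : 0 < s⁻¹ := inv_pos.2 hspos
  nlinarith [sq_nonneg (‖ζ‖ - ‖z‖), mul_pos hζ him, sq_nonneg (ζ.re - z.re),
    sq_nonneg (ζ.im + z.im)]

lemma pointwise (k : ℝ) (hk : 0 < k) (ζ z : ℂ) (hζ : 0 < ζ.im)
    (hz1 : k * z.re < z.im) (hzre : 0 < z.re) :
    ENNReal.ofReal (1 / (‖z‖ * ‖ζ - z‖ * ‖ζ - (starRingEnd ℂ) z‖)) ≤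
      ENNReal.ofReal (1 / (Real.sqrt (2 * (1 - (Real.sqrt (1 + k ^ 2))⁻¹)) * Real.sqrt ‖ζ‖)) *
        ENNReal.ofReal (1 / (‖z‖ * Real.sqrt ‖z‖ * ‖ζ - z‖)) := by
  set δ : ℝ := 1 - (Real.sqrt (1 + k ^ 2))⁻¹ with hδ_def
  have hδ : 0 < δ := by
    have hs1 : 1 < Real.sqrt (1 + k ^ 2) :=
      (Real.lt_sqrt (by norm_num)).mpr (by nlinarith)
    have : (Real.sqrt (1 + k ^ 2))⁻¹ < 1 := by
      rw [inv_lt_one_iff₀]; right; exact hs1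
    rw [hδ_def]; linarith
  have him : 0 < z.im := lt_trans (by positivity) hz1
  have hzn : 0 < ‖z‖ := by
    rw [norm_pos_iff]; exact fun h => by simp [h] at him
  have hζn : 0 < ‖ζ‖ := by
    rw [norm_pos_iff]; exact fun h => by simp [h] at hζ
  have hNsq := key_geom k hk ζ z hζ hz1 hzre
  have hN : Real.sqrt (2 * δ) * Real.sqrt ‖ζ‖ * Real.sqrt ‖z‖ ≤ ‖ζ - (starRingEnd ℂ) z‖ := by
    have e : Real.sqrt (2 * δ) * Real.sqrt ‖ζ‖ * Real.sqrt ‖z‖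
        = Real.sqrt (2 * δ * ‖ζ‖ * ‖z‖) := by
      rw [← Real.sqrt_mul (by positivity), ← Real.sqrt_mul (by positivity)]
    rw [e]
    calc Real.sqrt (2 * δ * ‖ζ‖ * ‖z‖) ≤ Real.sqrt (‖ζ - (starRingEnd ℂ) z‖ ^ 2) :=
          Real.sqrt_le_sqrt hNsq
      _ = ‖ζ - (starRingEnd ℂ) z‖ := Real.sqrt_sq (norm_nonneg _)
  rw [← ENNReal.ofReal_mul (by positivity)]
  apply ENNReal.ofReal_le_ofReal
  rcases eq_or_lt_of_le (norm_nonneg (ζ - z)) with hc | hc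
  · rw [← hc]
    simp
  have hNpos : 0 < ‖ζ - (starRingEnd ℂ) z‖ := lt_of_lt_of_le (by positivity) hN
  rw [show (1 / (Real.sqrt (2 * δ) * Real.sqrt ‖ζ‖)) * (1 / (‖z‖ * Real.sqrt ‖z‖ * ‖ζ - z‖))
      = 1 / (Real.sqrt (2 * δ) * Real.sqrt ‖ζ‖ * (‖z‖ * Real.sqrt ‖z‖ * ‖ζ - z‖)) from by
    rw [div_mul_div_comm, one_mul]]
  rw [div_le_div_iff₀ (by positivity) (by positivity)]
  nlinarith [mul_le_mul_of_nonneg_left hN (show (0:ℝ) ≤ ‖z‖ * ‖ζ - z‖ by positivity),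
    Real.sq_sqrt (norm_nonneg z), Real.sqrt_nonneg ‖z‖]

end

end Stmt6Aux

open MeasureTheory

/-- Uniform bound `|ζ|·∫_T dA(z)/(|z||ζ−z||ζ−z̄|) ≤ C` over the truncated
angular sector `T = {kξ < η < (1+μ)kξ} ∩ {|z| < R}`. -/
theorem stmt_6 (k μ R : ℝ) (hk : 0 < k) (hμ : 0 < μ) (hR : 0 < R) :
    ∃ C : ℝ, ∀ ζ : ℂ, 0 < ζ.im →
      ENNReal.ofReal ‖ζ‖ *
        ∫⁻ z in {z : ℂ | k * z.re < z.im ∧ z.im < (1 + μ) * k * z.re ∧ ‖z‖ < R},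
          ENNReal.ofReal (1 / (‖z‖ * ‖ζ - z‖ * ‖ζ - starRingEnd ℂ z‖)) ≤
      ENNReal.ofReal C := by
  classical
  set J : ℝ≥0∞ := ∫⁻ w : ℂ, Stmt6Aux.g1 w with hJ_def
  have hJ : J < ⊤ := Stmt6Aux.J1_lt_top
  set a : ℝ := Real.sqrt (2 * (1 - (Real.sqrt (1 + k ^ 2))⁻¹)) with ha_def
  have hd : 0 < 1 - (Real.sqrt (1 + k ^ 2))⁻¹ := by
    have hs1 : 1 < Real.sqrt (1 + k ^ 2) :=
      (Real.lt_sqrt (by norm_num)).mpr (by nlinarith)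
    have : (Real.sqrt (1 + k ^ 2))⁻¹ < 1 := by
      rw [inv_lt_one_iff₀]; right; exact hs1
    linarith
  have ha : 0 < a := by rw [ha_def]; positivity
  refine ⟨(1 / a) * J.toReal, fun ζ hζim => ?_⟩
  have hζ0 : ζ ≠ 0 := fun h => by simp [h] at hζim
  have hζn : 0 < ‖ζ‖ := norm_pos_iff.2 hζ0
  have hsζ : 0 < Real.sqrt ‖ζ‖ := Real.sqrt_pos.2 hζn
  set T : Set ℂ := {z : ℂ | k * z.re < z.im ∧ z.im < (1 + μ) * k * z.re ∧ ‖z‖ < R} with hT_def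
  have hT : MeasurableSet T := by
    have : T = {z : ℂ | k * z.re < z.im} ∩
        ({z : ℂ | z.im < (1 + μ) * k * z.re} ∩ {z : ℂ | ‖z‖ < R}) := rfl
    rw [this]
    exact (measurableSet_lt (measurable_const.mul Complex.measurable_re)
        Complex.measurable_im).inter
      ((measurableSet_lt Complex.measurable_im
          (measurable_const.mul Complex.measurable_re)).inter
        (measurableSet_lt measurable_norm measurable_const))
  have hpt : ∀ z ∈ T, ENNReal.ofReal (1 / (‖z‖ * ‖ζ - z‖ * ‖ζ - starRingEnd ℂ z‖)) ≤
      ENNReal.ofReal (1 / (a * Real.sqrt ‖ζ‖)) *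
        ENNReal.ofReal (1 / (‖z‖ * Real.sqrt ‖z‖ * ‖ζ - z‖)) := by
    intro z hz
    obtain ⟨h1, h2, _⟩ := hz
    have hzre : 0 < z.re := by nlinarith [mul_pos hμ hk]
    exact Stmt6Aux.pointwise k hk ζ z hζim h1 hzre
  have hsq : Real.sqrt ‖ζ‖ * Real.sqrt ‖ζ‖ = ‖ζ‖ := Real.mul_self_sqrt (norm_nonneg ζ)
  have hb : ‖ζ‖ * ((1 / (a * Real.sqrt ‖ζ‖)) * (1 / Real.sqrt ‖ζ‖)) = 1 / a := by
    calc ‖ζ‖ * ((1 / (a * Real.sqrt ‖ζ‖)) * (1 / Real.sqrt ‖ζ‖))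
        = ‖ζ‖ * (1 / (a * (Real.sqrt ‖ζ‖ * Real.sqrt ‖ζ‖))) := by ring
      _ = ‖ζ‖ * (1 / (a * ‖ζ‖)) := by rw [hsq]
      _ = 1 / a := by
          rw [mul_one_div, mul_comm a ‖ζ‖, div_mul_eq_div_div, div_self hζn.ne']
  calc ENNReal.ofReal ‖ζ‖ *
        ∫⁻ z in T, ENNReal.ofReal (1 / (‖z‖ * ‖ζ - z‖ * ‖ζ - starRingEnd ℂ z‖))
      ≤ ENNReal.ofReal ‖ζ‖ * ∫⁻ z in T, (ENNReal.ofReal (1 / (a * Real.sqrt ‖ζ‖)) *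
          ENNReal.ofReal (1 / (‖z‖ * Real.sqrt ‖z‖ * ‖ζ - z‖))) :=
        mul_le_mul_right (setLIntegral_mono' hT hpt) _
    _ = ENNReal.ofReal ‖ζ‖ * (ENNReal.ofReal (1 / (a * Real.sqrt ‖ζ‖)) *
          ∫⁻ z in T, ENNReal.ofReal (1 / (‖z‖ * Real.sqrt ‖z‖ * ‖ζ - z‖))) := by
        rw [lintegral_const_mul' _ _ ENNReal.ofReal_ne_top]
    _ ≤ ENNReal.ofReal ‖ζ‖ * (ENNReal.ofReal (1 / (a * Real.sqrt ‖ζ‖)) *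
          ∫⁻ z : ℂ, ENNReal.ofReal (1 / (‖z‖ * Real.sqrt ‖z‖ * ‖ζ - z‖))) :=
        mul_le_mul_right (mul_le_mul_right (setLIntegral_le_lintegral _ _) _) _
    _ = ENNReal.ofReal ‖ζ‖ * (ENNReal.ofReal (1 / (a * Real.sqrt ‖ζ‖)) *
          (ENNReal.ofReal (1 / Real.sqrt ‖ζ‖) * J)) := by
        rw [Stmt6Aux.scaling ζ hζ0]
    _ = ENNReal.ofReal (‖ζ‖ * ((1 / (a * Real.sqrt ‖ζ‖)) * (1 / Real.sqrt ‖ζ‖))) * J := by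
        rw [ENNReal.ofReal_mul (norm_nonneg ζ),
          ENNReal.ofReal_mul (show (0:ℝ) ≤ 1 / (a * Real.sqrt ‖ζ‖) by positivity)]
        ring
    _ = ENNReal.ofReal (1 / a) * J := by rw [hb]
    _ = ENNReal.ofReal (1 / a) * ENNReal.ofReal J.toReal := by
        rw [ENNReal.ofReal_toReal hJ.ne]
    _ = ENNReal.ofReal ((1 / a) * J.toReal) := by
        rw [ENNReal.ofReal_mul (by positivity)]
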